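/- Let L ≥ 1 be an integer, let s > 0 be a real number, let x ∈ ℝ², and let Q = [x₁ − s/2, x₁ + s/2] × [x₂ − s/2, x₂ + s/2]. If v is chosen uniformly at random from {0,…,L−1}², then the probability that there exist lattice points y, z ∈ Q ∩ ℤ² with cell_{L,v}(y) ≠ cell_{L,v}(z) is at most 2s/L. -/

import Mathlib

/-- The grid cell of a point p for the grid of cell size L shifted by v
(floor division; `/` on ℤ with positive divisor is floor division). -/
def cell (L : ℕ) (v p : ℤ × ℤ) : ℤ × ℤ :=
  ((p.1 - v.1) / (L : ℤ), (p.2 - v.2) / (L : ℤ))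

lemma bad_card_le (L a b : ℤ) (hL : 0 < L) (hab : a ≤ b) :
    ((Finset.Ico (0:ℤ) L).filter fun v => (a - v)/L ≠ (b - v)/L).card ≤ (b - a).toNat := by
  have h := Finset.card_le_card_of_injOn (f := fun v => (b - v) % L)
    (s := (Finset.Ico (0:ℤ) L).filter fun v => (a - v)/L ≠ (b - v)/L)
    (t := Finset.Ico (0:ℤ) (b - a)) ?_ ?_
  · simpa [Int.card_Ico] using h
  · intro v hv
    simp only [Finset.mem_coe, Finset.mem_filter, Finset.mem_Ico] at hv ⊢
    refine ⟨Int.emod_nonneg _ hL.ne', ?_⟩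
    by_contra h2
    push_neg at h2
    apply hv.2
    have key : L * ((b - v) / L) ≤ a - v := by
      have := Int.mul_ediv_add_emod (b - v) L
      omega
    have h1 : (b - v) / L ≤ (a - v) / L := by
      have := Int.ediv_le_ediv hL key
      rwa [Int.mul_ediv_cancel_left _ hL.ne'] at this
    have h3 : (a - v) / L ≤ (b - v) / L := Int.ediv_le_ediv hL (by omega)
    omega
  · intro v hv w hw hvw
    simp only [Finset.coe_filter, Set.mem_setOf_eq, Finset.mem_Ico] at hv hw
    have hm : v % L = w % L := by
      have h1 : (b - (b - v)) % L = (b - (b - w)) % L := by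
        simp only at hvw; rw [Int.sub_emod b (b - v), Int.sub_emod b (b - w), hvw]
      simpa using h1
    rwa [Int.emod_eq_of_lt hv.1.1 hv.1.2, Int.emod_eq_of_lt hw.1.1 hw.1.2] at hm

lemma sandwich (L a b y z v : ℤ) (hL : 0 < L) (hay : a ≤ y) (hyb : y ≤ b)
    (haz : a ≤ z) (hzb : z ≤ b) (h : (y - v)/L ≠ (z - v)/L) : (a - v)/L ≠ (b - v)/L := by
  intro heq
  apply h
  have h1 := Int.ediv_le_ediv hL (show a - v ≤ y - v by omega)
  have h2 := Int.ediv_le_ediv hL (show y - v ≤ b - v by omega)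
  have h3 := Int.ediv_le_ediv hL (show a - v ≤ z - v by omega)
  have h4 := Int.ediv_le_ediv hL (show z - v ≤ b - v by omega)
  omega

open scoped Classical in
/-- for a square Q of side s centered at x ∈ ℝ² and v uniform on
{0,…,L−1}², the probability that two lattice points of Q fall in different
cells of the grid (L,v) is at most 2s/L. -/
theorem square_split_probability (L : ℕ) (hL : 1 ≤ L) (s : ℝ) (hs : 0 < s) (x : ℝ × ℝ) :
    (((Finset.Ico (0 : ℤ) (L : ℤ) ×ˢ Finset.Ico (0 : ℤ) (L : ℤ)).filter fun v =>
        ∃ y z : ℤ × ℤ,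
          (x.1 - s / 2 ≤ (y.1 : ℝ) ∧ (y.1 : ℝ) ≤ x.1 + s / 2 ∧
            x.2 - s / 2 ≤ (y.2 : ℝ) ∧ (y.2 : ℝ) ≤ x.2 + s / 2) ∧
          (x.1 - s / 2 ≤ (z.1 : ℝ) ∧ (z.1 : ℝ) ≤ x.1 + s / 2 ∧
            x.2 - s / 2 ≤ (z.2 : ℝ) ∧ (z.2 : ℝ) ≤ x.2 + s / 2) ∧
          cell L v y ≠ cell L v z).card : ℝ) /
      ((Finset.Ico (0 : ℤ) (L : ℤ) ×ˢ Finset.Ico (0 : ℤ) (L : ℤ)).card : ℝ) ≤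
      2 * s / L := by
  have hLz : (0:ℤ) < (L:ℤ) := by exact_mod_cast hL
  have hLr : (0:ℝ) < (L:ℝ) := by exact_mod_cast hL
  set I := Finset.Ico (0 : ℤ) (L : ℤ) with hI
  set Bad := (I ×ˢ I).filter fun v =>
        ∃ y z : ℤ × ℤ,
          (x.1 - s / 2 ≤ (y.1 : ℝ) ∧ (y.1 : ℝ) ≤ x.1 + s / 2 ∧
            x.2 - s / 2 ≤ (y.2 : ℝ) ∧ (y.2 : ℝ) ≤ x.2 + s / 2) ∧
          (x.1 - s / 2 ≤ (z.1 : ℝ) ∧ (z.1 : ℝ) ≤ x.1 + s / 2 ∧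
            x.2 - s / 2 ≤ (z.2 : ℝ) ∧ (z.2 : ℝ) ≤ x.2 + s / 2) ∧
          cell L v y ≠ cell L v z with hBad
  have hIcard : I.card = L := by simp [hI, Int.card_Ico]
  rcases Bad.eq_empty_or_nonempty with hE | hNE
  · rw [hE]
    simp only [Finset.card_empty, Nat.cast_zero, zero_div]
    positivity
  -- extract witnesses to get a ≤ b in both coordinates
  set a1 : ℤ := ⌈x.1 - s/2⌉ with ha1
  set b1 : ℤ := ⌊x.1 + s/2⌋ with hb1
  set a2 : ℤ := ⌈x.2 - s/2⌉ with ha2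
  set b2 : ℤ := ⌊x.2 + s/2⌋ with hb2
  obtain ⟨v0, hv0⟩ := hNE
  rw [hBad, Finset.mem_filter] at hv0
  obtain ⟨-, y0, z0, hy0, -, -⟩ := hv0
  have hab1 : a1 ≤ b1 := le_trans (Int.ceil_le.mpr hy0.1) (Int.le_floor.mpr hy0.2.1)
  have hab2 : a2 ≤ b2 := le_trans (Int.ceil_le.mpr hy0.2.2.1) (Int.le_floor.mpr hy0.2.2.2)
  set B1 := I.filter (fun w => (a1 - w)/(L:ℤ) ≠ (b1 - w)/(L:ℤ)) with hB1
  set B2 := I.filter (fun w => (a2 - w)/(L:ℤ) ≠ (b2 - w)/(L:ℤ)) with hB2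
  have hsub : Bad ⊆ (B1 ×ˢ I) ∪ (I ×ˢ B2) := by
    intro v hv
    rw [hBad, Finset.mem_filter, Finset.mem_product] at hv
    obtain ⟨⟨hv1, hv2⟩, y, z, hy, hz, hne⟩ := hv
    have hne' : (y.1 - v.1)/(L:ℤ) ≠ (z.1 - v.1)/(L:ℤ) ∨
        (y.2 - v.2)/(L:ℤ) ≠ (z.2 - v.2)/(L:ℤ) := by
      by_contra h
      push_neg at h
      exact hne (Prod.ext h.1 h.2)
    rw [Finset.mem_union, Finset.mem_product, Finset.mem_product]
    rcases hne' with h | h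
    · left
      refine ⟨Finset.mem_filter.mpr ⟨hv1, ?_⟩, hv2⟩
      exact sandwich (L:ℤ) a1 b1 y.1 z.1 v.1 hLz (Int.ceil_le.mpr hy.1)
        (Int.le_floor.mpr hy.2.1) (Int.ceil_le.mpr hz.1) (Int.le_floor.mpr hz.2.1) h
    · right
      refine ⟨hv1, Finset.mem_filter.mpr ⟨hv2, ?_⟩⟩
      exact sandwich (L:ℤ) a2 b2 y.2 z.2 v.2 hLz (Int.ceil_le.mpr hy.2.2.1)
        (Int.le_floor.mpr hy.2.2.2) (Int.ceil_le.mpr hz.2.2.1) (Int.le_floor.mpr hz.2.2.2) h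
  have hcard : Bad.card ≤ (b1 - a1).toNat * L + L * (b2 - a2).toNat := by
    calc Bad.card ≤ ((B1 ×ˢ I) ∪ (I ×ˢ B2)).card := Finset.card_le_card hsub
      _ ≤ (B1 ×ˢ I).card + (I ×ˢ B2).card := Finset.card_union_le _ _
      _ = B1.card * L + L * B2.card := by rw [Finset.card_product, Finset.card_product, hIcard]
      _ ≤ (b1 - a1).toNat * L + L * (b2 - a2).toNat := by
          gcongr
          · exact bad_card_le _ _ _ hLz hab1
          · exact bad_card_le _ _ _ hLz hab2
  -- real arithmetic
  have hba1 : ((b1 - a1).toNat : ℝ) ≤ s := by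
    have h1 : ((b1:ℝ) - a1) ≤ s := by
      have := Int.floor_le (x.1 + s/2)
      have := Int.le_ceil (x.1 - s/2)
      rw [hb1, ha1]; linarith
    have hnn : (0:ℤ) ≤ b1 - a1 := by omega
    have h2 : (((b1 - a1).toNat : ℕ) : ℝ) = ((b1 - a1 : ℤ) : ℝ) := by
      exact_mod_cast congrArg (Int.cast : ℤ → ℝ) (Int.toNat_of_nonneg hnn)
    rw [h2]; push_cast; linarith
  have hba2 : ((b2 - a2).toNat : ℝ) ≤ s := by
    have h1 : ((b2:ℝ) - a2) ≤ s := by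
      have := Int.floor_le (x.2 + s/2)
      have := Int.le_ceil (x.2 - s/2)
      rw [hb2, ha2]; linarith
    have hnn : (0:ℤ) ≤ b2 - a2 := by omega
    have h2 : (((b2 - a2).toNat : ℕ) : ℝ) = ((b2 - a2 : ℤ) : ℝ) := by
      exact_mod_cast congrArg (Int.cast : ℤ → ℝ) (Int.toNat_of_nonneg hnn)
    rw [h2]; push_cast; linarith
  have hden : (((I ×ˢ I).card : ℕ) : ℝ) = (L:ℝ) * L := by
    rw [Finset.card_product, hIcard]; push_cast; ring
  rw [hden, div_le_div_iff₀ (by positivity) hLr]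
  have hcr : (Bad.card : ℝ) ≤ s * L + s * L := by
    calc (Bad.card : ℝ) ≤ ((b1 - a1).toNat * L + L * (b2 - a2).toNat : ℕ) := by exact_mod_cast hcard
      _ = ((b1 - a1).toNat : ℝ) * L + L * ((b2 - a2).toNat : ℝ) := by push_cast; ring
      _ ≤ s * L + s * L := by nlinarith
  nlinarith
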